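/- Let F be an AL-RNN with the property that for every sign pattern s the matrix A + W·D_s, viewed as a complex matrix, has no eigenvalue of absolute value 1 (hyperbolicity), and assume moreover that every fixed point of F has all of its last P coordinates nonzero. Let z_n = F^n(z_0) be an orbit that is bounded and satisfies z_n ∈ ⋃_s U_s for all n, with symbolic sequence a_n. Then the orbit is asymptotically fixed (i.e., there exists z* with F(z*) = z* and z_n → z*) if and only if the symbolic sequence is eventually constant, i.e., there exist N and a sign pattern s* with a_n = s* for all n ≥ N. -/

import Mathlib

open Matrix Filter Topology

/-- `Φ*`: identity on the first `M − P` coordinates, ReLU on the last `P` coordinates. -/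
noncomputable def phiStar (M P : ℕ) (z : Fin M → ℝ) : Fin M → ℝ :=
  fun j => if (j : ℕ) < M - P then z j else max 0 (z j)

/-- The AL-RNN map `F(z) = A z + W Φ*(z) + h`. -/
noncomputable def alrnn (M P : ℕ) (A W : Matrix (Fin M) (Fin M) ℝ) (h : Fin M → ℝ)
    (z : Fin M → ℝ) : Fin M → ℝ :=
  A.mulVec z + W.mulVec (phiStar M P z) + h

/-- The diagonal matrix `D_s` attached to a sign pattern `s : Fin P → Fin 2`: its first
`M − P` diagonal entries are `1` and the `(M − P + i)`-th diagonal entry is `s i`. -/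
noncomputable def signDiag (M P : ℕ) (s : Fin P → Fin 2) : Matrix (Fin M) (Fin M) ℝ :=
  Matrix.diagonal fun j =>
    if (j : ℕ) < M - P then 1
    else if hj : (j : ℕ) - (M - P) < P then ((s ⟨(j : ℕ) - (M - P), hj⟩ : ℕ) : ℝ) else 0

/-- The open linear subregion `U_s`: the `(M − P + i)`-th coordinate is `> 0` if
`s i = 1` and `< 0` if `s i = 0`. -/
def regionOpen (M P : ℕ) (hPM : P ≤ M) (s : Fin P → Fin 2) : Set (Fin M → ℝ) :=
  { z | ∀ i : Fin P,
      if s i = 1 then 0 < z ⟨M - P + (i : ℕ), by omega⟩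
      else z ⟨M - P + (i : ℕ), by omega⟩ < 0 }

/-- The closed linear subregion: the sign conditions of `s` hold non-strictly. -/
def regionClosed (M P : ℕ) (hPM : P ≤ M) (s : Fin P → Fin 2) : Set (Fin M → ℝ) :=
  { z | ∀ i : Fin P,
      if s i = 1 then 0 ≤ z ⟨M - P + (i : ℕ), by omega⟩
      else z ⟨M - P + (i : ℕ), by omega⟩ ≤ 0 }


/-- Powers of a restricted endomorphism agree with ambient powers. -/
lemma pow_restrict_val {V : Type*} [AddCommGroup V] [Module ℂ V] {K : Submodule ℂ V}
    (R : K →ₗ[ℂ] K) (Tam : V →ₗ[ℂ] V) (hcomm : ∀ y : K, ((R y : V)) = Tam (y : V)) :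
    ∀ (n : ℕ) (y : K), (((R ^ n) y : K) : V) = (Tam ^ n) (y : V) := by
  intro n
  induction n with
  | zero => intro y; simp
  | succ n ih =>
    intro y
    rw [pow_succ, pow_succ, Module.End.mul_apply, Module.End.mul_apply, ← hcomm, ih]

/-- Decay of powers on a generalized eigenvector with eigenvalue of modulus `< 1`. -/
lemma gen_eig_decay {V : Type*} [NormedAddCommGroup V] [NormedSpace ℂ V]
    (T : V →ₗ[ℂ] V) (μ : ℂ) (hμ : ‖μ‖ < 1) (x : V) (m : ℕ)
    (hx : ((T - μ • (1 : V →ₗ[ℂ] V)) ^ m) x = 0) :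
    Tendsto (fun n => (T ^ n) x) atTop (𝓝 0) := by
  set N : V →ₗ[ℂ] V := T - μ • (1 : V →ₗ[ℂ] V) with hN
  have hT : T = N + μ • (1 : V →ₗ[ℂ] V) := by rw [hN, sub_add_cancel]
  have hNk0 : ∀ k, m ≤ k → (N ^ k) x = 0 := by
    intro k hk
    have : N ^ k = N ^ (k - m) * N ^ m := by rw [← pow_add]; congr 1; omega
    rw [this, Module.End.mul_apply, hx, map_zero]
  by_cases hμ0 : μ = 0
  · -- eventually zero
    have hev : ∀ n ≥ m, (T ^ n) x = 0 := by
      intro n hn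
      have : T = N := by rw [hT, hμ0]; simp
      rw [this]; exact hNk0 n hn
    refine tendsto_const_nhds.congr' ?_
    filter_upwards [eventually_ge_atTop m] with n hn
    exact (hev n hn).symm
  · have hcomm : Commute N (μ • (1 : V →ₗ[ℂ] V)) := (Commute.one_right N).smul_right μ
    have key : ∀ n, m ≤ n → (T ^ n) x =
        ∑ k ∈ Finset.range m, (n.choose k : ℂ) • μ ^ (n - k) • (N ^ k) x := by
      intro n hn
      have h1 : (T ^ n) x = ∑ k ∈ Finset.range (n + 1),
          (n.choose k : ℂ) • μ ^ (n - k) • (N ^ k) x := by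
        rw [hT, hcomm.add_pow]
        rw [LinearMap.sum_apply]
        refine Finset.sum_congr rfl fun k _ => ?_
        rw [smul_pow, one_pow]
        simp only [Module.End.mul_apply, LinearMap.smul_apply, Module.End.one_apply,
          Module.End.natCast_apply]
        rw [_root_.map_smul, _root_.map_nsmul, Nat.cast_smul_eq_nsmul ℂ, smul_comm]
      rw [h1]
      symm
      apply Finset.sum_subset
      · intro k hk
        simp only [Finset.mem_range] at hk ⊢
        omega
      · intro k _ hk
        simp only [Finset.mem_range, not_lt] at hk
        rw [hNk0 k hk]
        simp
    have hterm : ∀ k ∈ Finset.range m, Tendsto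
        (fun n => (n.choose k : ℂ) • μ ^ (n - k) • (N ^ k) x) atTop (𝓝 0) := by
      intro k _
      rw [tendsto_zero_iff_norm_tendsto_zero]
      have habs : ‖μ‖ ≠ 0 := by
        simpa using hμ0
      have hr0 : (0:ℝ) < ‖μ‖ := lt_of_le_of_ne (norm_nonneg μ) (Ne.symm habs)
      have hbound : ∀ n, ‖(n.choose k : ℂ) • μ ^ (n - k) • (N ^ k) x‖ ≤
          (n : ℝ) ^ k * ‖μ‖ ^ n * (‖(N ^ k) x‖ / ‖μ‖ ^ k) := by
        intro n
        rw [norm_smul, norm_smul]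
        by_cases hkn : k ≤ n
        · have h1 : ‖(n.choose k : ℂ)‖ ≤ (n : ℝ) ^ k := by
            rw [Complex.norm_natCast]
            exact_mod_cast Nat.choose_le_pow n k
          have h2 : ‖μ ^ (n - k)‖ = ‖μ‖ ^ n / ‖μ‖ ^ k := by
            rw [norm_pow, eq_div_iff (by positivity), ← pow_add]
            congr 1; omega
          calc ‖(n.choose k : ℂ)‖ * (‖μ ^ (n - k)‖ * ‖(N ^ k) x‖)
              ≤ (n:ℝ) ^ k * (‖μ ^ (n - k)‖ * ‖(N ^ k) x‖) := by
                apply mul_le_mul_of_nonneg_right h1; positivity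
            _ = (n : ℝ) ^ k * ‖μ‖ ^ n * (‖(N ^ k) x‖ / ‖μ‖ ^ k) := by
                rw [h2]; ring
        · have : n.choose k = 0 := Nat.choose_eq_zero_of_lt (by omega)
          rw [this]
          simp only [Nat.cast_zero, norm_zero, zero_mul]
          positivity
      apply squeeze_zero (fun n => norm_nonneg _) hbound
      have := (tendsto_pow_const_mul_const_pow_of_lt_one k (norm_nonneg μ) hμ).mul_const
        (‖(N ^ k) x‖ / ‖μ‖ ^ k)
      simpa using this
    have hsum := tendsto_finset_sum (Finset.range m) hterm
    simp only [Finset.sum_const_zero] at hsum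
    refine hsum.congr' ?_
    filter_upwards [eventually_ge_atTop m] with n hn
    exact (key n hn).symm

/-- Bounded orbits of a hyperbolic complex linear map tend to zero. -/
lemma bounded_orbit_tendsto_complex (M : ℕ) (B : Matrix (Fin M) (Fin M) ℂ)
    (hB : ∀ μ ∈ spectrum ℂ B, ‖μ‖ ≠ 1)
    (w : ℕ → Fin M → ℂ) (hw : ∀ n, w (n + 1) = B.mulVec (w n))
    (C : ℝ) (hC : ∀ n, ‖w n‖ ≤ C) :
    Tendsto w atTop (𝓝 0) := by
  set T : (Fin M → ℂ) →ₗ[ℂ] (Fin M → ℂ) := Matrix.toLinAlgEquiv' B with hTdef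
  have hTapp : ∀ v : Fin M → ℂ, T v = B.mulVec v := fun v => by
    rw [hTdef, Matrix.toLinAlgEquiv'_apply]
  have hwn : ∀ n, w n = (T ^ n) (w 0) := by
    intro n
    induction n with
    | zero => simp
    | succ n ih => rw [hw n, ih, ← hTapp, ← Module.End.mul_apply, ← pow_succ']
  -- spectrum of T equals spectrum of B
  have hspecT : spectrum ℂ T = spectrum ℂ B := AlgEquiv.spectrum_eq Matrix.toLinAlgEquiv' B
  -- the submodule of bounded orbits
  let K : Submodule ℂ (Fin M → ℂ) :=
    { carrier := {x | ∃ c : ℝ, ∀ n, ‖(T ^ n) x‖ ≤ c}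
      add_mem' := by
        rintro x y ⟨c1, h1⟩ ⟨c2, h2⟩
        exact ⟨c1 + c2, fun n => by
          rw [map_add]
          exact (norm_add_le _ _).trans (add_le_add (h1 n) (h2 n))⟩
      zero_mem' := ⟨0, fun n => by simp⟩
      smul_mem' := by
        rintro c x ⟨c1, h1⟩
        exact ⟨‖c‖ * c1, fun n => by
          rw [_root_.map_smul, norm_smul]
          exact mul_le_mul_of_nonneg_left (h1 n) (norm_nonneg c)⟩ }
  have hTK : ∀ x ∈ K, T x ∈ K := by
    rintro x ⟨c, hc⟩
    exact ⟨c, fun n => by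
      have : (T ^ n) (T x) = (T ^ (n + 1)) x := by rw [pow_succ, Module.End.mul_apply]
      rw [this]; exact hc (n + 1)⟩
  set S : K →ₗ[ℂ] K := T.restrict hTK with hSdef
  have hSval : ∀ y : K, ((S y : K) : Fin M → ℂ) = T (y : Fin M → ℂ) := fun y => rfl
  -- every eigenvalue of S has modulus < 1
  have hspec : ∀ μ : ℂ, Module.End.HasEigenvalue S μ → ‖μ‖ < 1 := by
    intro μ hμ
    obtain ⟨x, hx, hx0⟩ := hμ.exists_hasEigenvector
    have hxv : T (x : Fin M → ℂ) = μ • (x : Fin M → ℂ) := by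
      rw [← hSval, Module.End.mem_eigenspace_iff.mp hx]; rfl
    have hxvne : (x : Fin M → ℂ) ≠ 0 := fun hh => hx0 (Subtype.ext hh)
    have hTeig : Module.End.HasEigenvalue T μ :=
      Module.End.hasEigenvalue_of_hasEigenvector
        ⟨Module.End.mem_eigenspace_iff.mpr hxv, hxvne⟩
    have hμspec : μ ∈ spectrum ℂ T := Module.End.hasEigenvalue_iff_mem_spectrum.mp hTeig
    have hne1 : ‖μ‖ ≠ 1 := hB μ (hspecT ▸ hμspec)
    -- |μ| ≤ 1 from boundedness
    obtain ⟨c, hc⟩ := x.2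
    have hpow : ∀ n, (T ^ n) ((x : K) : Fin M → ℂ) = μ ^ n • ((x : K) : Fin M → ℂ) := by
      intro n
      induction n with
      | zero => simp
      | succ n ih =>
        rw [pow_succ, Module.End.mul_apply, hxv, _root_.map_smul, ih, smul_smul, ← pow_succ']
    have hle : ‖μ‖ ≤ 1 := by
      by_contra hgt
      push_neg at hgt
      have hnorm : (0:ℝ) < ‖(x : Fin M → ℂ)‖ := norm_pos_iff.mpr hxvne
      have htend : Tendsto (fun n : ℕ => ‖μ‖ ^ n) atTop atTop :=
        tendsto_pow_atTop_atTop_of_one_lt hgt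
      obtain ⟨n, hn⟩ := (htend.eventually_gt_atTop (c / ‖(x : Fin M → ℂ)‖)).exists
      have h1 := hc n
      rw [hpow n, norm_smul, norm_pow] at h1
      rw [div_lt_iff₀ hnorm] at hn
      linarith
    exact lt_of_le_of_ne hle hne1
  -- every element of K has decaying orbit
  have hdecay : ∀ x : K, Tendsto (fun n => (T ^ n) ((x : K) : Fin M → ℂ)) atTop (𝓝 0) := by
    intro x
    have hx : x ∈ ⨆ μ : ℂ, Module.End.maxGenEigenspace S μ := by
      rw [Module.End.iSup_maxGenEigenspace_eq_top S]; trivial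
    refine Submodule.iSup_induction (motive := fun y : K => Tendsto (fun n => (T ^ n) ((y : K) : Fin M → ℂ)) atTop (𝓝 0)) _ hx ?_ ?_ ?_
    · intro μ y hy
      by_cases hy0 : y = 0
      · subst hy0; simp [tendsto_const_nhds]
      obtain ⟨k, hk⟩ := (Module.End.mem_maxGenEigenspace S μ y).mp hy
      have hμlt : ‖μ‖ < 1 := by
        apply hspec
        apply Module.End.hasEigenvalue_of_hasGenEigenvalue (k := k)
        rw [Module.End.HasGenEigenvalue, Module.End.HasUnifEigenvalue, Submodule.ne_bot_iff]
        exact ⟨y, (Module.End.mem_genEigenspace_nat).mpr hk, hy0⟩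
      -- push the nilpotency to the ambient space
      have hcomm2 : ∀ y : K, (((S - μ • (1 : K →ₗ[ℂ] K)) y : K) : Fin M → ℂ)
          = (T - μ • (1 : (Fin M → ℂ) →ₗ[ℂ] (Fin M → ℂ))) ((y : K) : Fin M → ℂ) := by
        intro y; simp [hSval]
      have hamb : ((T - μ • (1 : (Fin M → ℂ) →ₗ[ℂ] (Fin M → ℂ))) ^ k) ((y : K) : Fin M → ℂ) = 0 := by
        rw [← pow_restrict_val (S - μ • (1 : K →ₗ[ℂ] K)) _ hcomm2 k y, hk]
        simp
      exact gen_eig_decay T μ hμlt ((y : K) : Fin M → ℂ) k hamb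
    · simp [tendsto_const_nhds]
    · intro y1 y2 h1 h2
      have := h1.add h2
      simp only [add_zero] at this
      refine this.congr fun n => ?_
      rw [← map_add]; rfl
  have hx0K : w 0 ∈ K := ⟨C, fun n => by rw [← hwn n]; exact hC n⟩
  have := hdecay ⟨w 0, hx0K⟩
  refine this.congr fun n => (hwn n).symm

/-- Bounded orbits of a hyperbolic real linear map tend to zero. -/
lemma bounded_orbit_tendsto_real (M : ℕ) (B : Matrix (Fin M) (Fin M) ℝ)
    (hB : ∀ μ ∈ spectrum ℂ (B.map Complex.ofReal), ‖μ‖ ≠ 1)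
    (w : ℕ → Fin M → ℝ) (hw : ∀ n, w (n + 1) = B.mulVec (w n))
    (C : ℝ) (hC : ∀ n, ‖w n‖ ≤ C) :
    Tendsto w atTop (𝓝 0) := by
  set wc : ℕ → Fin M → ℂ := fun n j => (w n j : ℂ) with hwc
  have hnorm : ∀ n, ‖wc n‖ = ‖w n‖ := by
    intro n
    simp only [Pi.norm_def, hwc]
    congr 1
    exact Finset.sup_congr rfl fun j _ => by simp [Complex.nnnorm_real]
  have hwcrec : ∀ n, wc (n + 1) = (B.map Complex.ofReal).mulVec (wc n) := by
    intro n
    funext j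
    have h2 := RingHom.map_mulVec Complex.ofRealHom B (w n) j
    rw [hwc]
    simp only
    rw [hw n]
    exact h2
  have htend := bounded_orbit_tendsto_complex M (B.map Complex.ofReal) hB wc hwcrec C
    (fun n => by rw [hnorm]; exact hC n)
  rw [tendsto_zero_iff_norm_tendsto_zero] at htend ⊢
  refine htend.congr fun n => hnorm n

/-- On the open region, `Φ*` acts as multiplication by `D_s`. -/
lemma phiStar_eq_signDiag (M P : ℕ) (hPM : P ≤ M) (s : Fin P → Fin 2) (z : Fin M → ℝ)
    (hz : z ∈ regionOpen M P hPM s) :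
    phiStar M P z = (signDiag M P s).mulVec z := by
  funext j
  rw [signDiag, Matrix.mulVec_diagonal]
  by_cases hj : (j : ℕ) < M - P
  · simp [phiStar, hj]
  · have hj2 : (j : ℕ) - (M - P) < P := by omega
    have hji : j = ⟨M - P + ((j : ℕ) - (M - P)), by omega⟩ := Fin.ext (by simp; omega)
    have hzi := hz ⟨(j : ℕ) - (M - P), hj2⟩
    simp only at hzi
    rw [← hji] at hzi
    by_cases hsi : s ⟨(j : ℕ) - (M - P), hj2⟩ = 1
    · rw [if_pos hsi] at hzi
      simp only [phiStar, if_neg hj, if_neg hj, dif_pos hj2, hsi]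
      rw [max_eq_right hzi.le]
      norm_num
    · rw [if_neg hsi] at hzi
      have hs0 : s ⟨(j : ℕ) - (M - P), hj2⟩ = 0 := by
        have := (s ⟨(j : ℕ) - (M - P), hj2⟩).isLt
        have hv : ((s ⟨(j : ℕ) - (M - P), hj2⟩ : Fin 2) : ℕ) ≠ 1 :=
          fun hh => hsi (Fin.ext hh)
        exact Fin.ext (by omega)
      simp only [phiStar, if_neg hj, dif_pos hj2, hs0]
      rw [max_eq_left hzi.le]
      norm_num

/-- The AL-RNN map is continuous. -/
lemma alrnn_continuous (M P : ℕ) (A W : Matrix (Fin M) (Fin M) ℝ) (h : Fin M → ℝ) :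
    Continuous (alrnn M P A W h) := by
  have hphi : Continuous (phiStar M P) := by
    apply continuous_pi
    intro j
    unfold phiStar
    by_cases hj : (j : ℕ) < M - P
    · simpa [hj] using continuous_apply j
    · simp only [if_neg hj]
      exact continuous_const.max (continuous_apply j)
  have h1 : Continuous fun z : Fin M → ℝ => A.mulVec z := by
    have := (Matrix.mulVecLin A).continuous_of_finiteDimensional
    exact this
  have h2 : Continuous fun z : Fin M → ℝ => W.mulVec (phiStar M P z) := by
    have hc := (Matrix.mulVecLin W).continuous_of_finiteDimensional
    exact hc.comp hphi
  unfold alrnn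
  exact (h1.add h2).add continuous_const



lemma fin2_eq_zero_of_ne_one {x : Fin 2} (hx : x ≠ 1) : x = 0 := by
  fin_cases x
  · rfl
  · exact absurd rfl hx

/-- For a hyperbolic AL-RNN (no linear-subregion matrix `A + W·D_s` has a
complex eigenvalue of absolute value 1) all of whose fixed points have nonzero last `P`
coordinates, a bounded orbit staying in the union of the open subregions is asymptotically
fixed if and only if its symbolic sequence is eventually constant. -/
theorem stmt0 (M P : ℕ) (hM : 1 ≤ M) (hP : 1 ≤ P) (hPM : P ≤ M)
    (A W : Matrix (Fin M) (Fin M) ℝ) (hA : A.IsDiag) (h : Fin M → ℝ)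
    (hhyp : ∀ s : Fin P → Fin 2,
      ∀ μ ∈ spectrum ℂ (((A + W * signDiag M P s)).map Complex.ofReal),
        ‖μ‖ ≠ 1)
    (hfix : ∀ z : Fin M → ℝ, alrnn M P A W h z = z →
      ∀ i : Fin P, z ⟨M - P + (i : ℕ), by omega⟩ ≠ 0)
    (z : ℕ → Fin M → ℝ) (horb : ∀ n : ℕ, z (n + 1) = alrnn M P A W h (z n))
    (hbdd : Bornology.IsBounded (Set.range z))
    (a : ℕ → Fin P → Fin 2) (ha : ∀ n : ℕ, z n ∈ regionOpen M P hPM (a n)) :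
    (∃ zs : Fin M → ℝ, alrnn M P A W h zs = zs ∧ Tendsto z atTop (𝓝 zs)) ↔
      (∃ N : ℕ, ∃ sstar : Fin P → Fin 2, ∀ n ≥ N, a n = sstar) := by
  constructor
  · -- asymptotically fixed → eventually constant coding
    rintro ⟨zs, hzs, hconv⟩
    set sstar : Fin P → Fin 2 :=
      fun i => if 0 < zs ⟨M - P + (i : ℕ), by omega⟩ then 1 else 0 with hsstar
    have hev : ∀ i : Fin P, ∀ᶠ n in atTop, a n i = sstar i := by
      intro i
      have hcoord : Tendsto (fun n => z n ⟨M - P + (i : ℕ), by omega⟩) atTop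
          (𝓝 (zs ⟨M - P + (i : ℕ), by omega⟩)) := (tendsto_pi_nhds.mp hconv) _
      have hne := hfix zs hzs i
      rcases lt_or_gt_of_ne hne with hlt | hgt
      · filter_upwards [hcoord.eventually_lt_const hlt] with n hn
        have hai := ha n i
        have h1 : a n i ≠ 1 := by
          intro h1
          rw [if_pos h1] at hai
          exact absurd hai (not_lt.mpr hn.le)
        rw [fin2_eq_zero_of_ne_one h1, hsstar]
        simp only
        rw [if_neg (not_lt.mpr hlt.le)]
      · filter_upwards [hcoord.eventually_const_lt hgt] with n hn
        have hai := ha n i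
        have h1 : a n i = 1 := by
          by_contra h1
          rw [if_neg h1] at hai
          exact absurd hai (not_lt.mpr hn.le)
        rw [h1, hsstar]
        simp only
        rw [if_pos hgt]
    have hall : ∀ᶠ n in atTop, ∀ i : Fin P, a n i = sstar i := eventually_all.mpr hev
    obtain ⟨N, hN⟩ := eventually_atTop.mp hall
    exact ⟨N, sstar, fun n hn => funext fun i => hN n hn i⟩
  · -- eventually constant coding → asymptotically fixed
    rintro ⟨N, s, hs⟩
    set B := A + W * signDiag M P s with hBdef
    have hstep : ∀ n, N ≤ n → z (n + 1) = B.mulVec (z n) + h := by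
      intro n hn
      have hzn : z n ∈ regionOpen M P hPM s := by
        have := ha n
        rwa [hs n hn] at this
      rw [horb n]
      unfold alrnn
      rw [phiStar_eq_signDiag M P hPM s (z n) hzn, Matrix.mulVec_mulVec,
        ← Matrix.add_mulVec]
    -- `1 - B` is invertible over `ℝ`
    have h1spec : (1 : ℂ) ∉ spectrum ℂ (B.map Complex.ofReal) := by
      intro hmem
      exact hhyp s 1 hmem (by simp)
    have hunitC : IsUnit ((1 : Matrix (Fin M) (Fin M) ℂ) - B.map Complex.ofReal) := by
      rw [spectrum.notMem_iff] at h1spec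
      simpa using h1spec
    have hmap : (1 : Matrix (Fin M) (Fin M) ℂ) - B.map Complex.ofReal
        = ((1 : Matrix (Fin M) (Fin M) ℝ) - B).map Complex.ofReal := by
      ext i j
      simp [Matrix.map_apply, Matrix.sub_apply, Matrix.one_apply, apply_ite Complex.ofReal]
    have hdetR : ((1 : Matrix (Fin M) (Fin M) ℝ) - B).det ≠ 0 := by
      intro h0
      have hdetC := (Matrix.isUnit_iff_isUnit_det _).mp hunitC
      rw [hmap] at hdetC
      have hdd : ((1 - B).map Complex.ofReal).det = Complex.ofReal ((1 - B).det) :=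
        (RingHom.map_det Complex.ofRealHom _).symm
      rw [hdd, h0] at hdetC
      simp at hdetC
    have hunitR : IsUnit ((1 : Matrix (Fin M) (Fin M) ℝ) - B) :=
      (Matrix.isUnit_iff_isUnit_det _).mpr (isUnit_iff_ne_zero.mpr hdetR)
    set p : Fin M → ℝ := ((1 : Matrix (Fin M) (Fin M) ℝ) - B)⁻¹.mulVec h with hpdef
    have hfp : B.mulVec p + h = p := by
      have h1 : ((1 : Matrix (Fin M) (Fin M) ℝ) - B).mulVec p = h := by
        rw [hpdef, Matrix.mulVec_mulVec,
          Matrix.mul_nonsing_inv _ ((Matrix.isUnit_iff_isUnit_det _).mp hunitR),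
          Matrix.one_mulVec]
      have h2 : p - B.mulVec p = h := by
        rw [← h1, Matrix.sub_mulVec, Matrix.one_mulVec]
      rw [← h2]
      abel
    set w : ℕ → Fin M → ℝ := fun n => z (N + n) - p with hwdef
    have hwrec : ∀ n, w (n + 1) = B.mulVec (w n) := by
      intro n
      rw [hwdef]
      simp only
      have hBp : B.mulVec p = p - h := eq_sub_of_add_eq hfp
      rw [show N + (n + 1) = (N + n) + 1 by ring, hstep (N + n) (by omega),
        Matrix.mulVec_sub, hBp]
      abel
    obtain ⟨C, hC⟩ := isBounded_iff_forall_norm_le.mp hbdd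
    have hwb : ∀ n, ‖w n‖ ≤ C + ‖p‖ := fun n => by
      rw [hwdef]
      exact (norm_sub_le _ _).trans
        (add_le_add (hC _ (Set.mem_range_self _)) le_rfl)
    have hw0 := bounded_orbit_tendsto_real M B (hhyp s) w hwrec (C + ‖p‖) hwb
    have hzp : Tendsto z atTop (𝓝 p) := by
      have h1 : Tendsto (fun n => z (N + n)) atTop (𝓝 p) := by
        have h2 := hw0.add (tendsto_const_nhds (x := p))
        simp only [zero_add] at h2
        refine h2.congr fun n => ?_
        rw [hwdef]
        simp only
        abel
      have h3 : (fun n => z (N + n)) = fun n => z (n + N) :=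
        funext fun n => by rw [add_comm]
      rw [h3] at h1
      exact (tendsto_add_atTop_iff_nat N).mp h1
    refine ⟨p, ?_, hzp⟩
    have hcont := alrnn_continuous M P A W h
    have h2 : Tendsto (fun n => z (n + 1)) atTop (𝓝 p) :=
      (tendsto_add_atTop_iff_nat 1).mpr hzp
    have h3 : Tendsto (fun n => alrnn M P A W h (z n)) atTop
        (𝓝 (alrnn M P A W h p)) := (hcont.tendsto p).comp hzp
    exact tendsto_nhds_unique (h3.congr fun n => (horb n).symm) h2
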